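/- (Example 1, case A formulas.) For the Example 1 joint distribution with parameters α, β ∈ [0,1] satisfying α + β̄ > 0: I(X;A) + H(X | Y, A) = 1 − 0.5(α + β̄)·H_b(α/(α + β̄)); H(Y | X, A) = 0.5(ᾱ + β); and I(X;A) + H(X, Y | A) = 1 + 0.5(ᾱ + β). -/

import Mathlib

open Finset

/-- Probability that the random variable `X` takes the value `s`, under the pmf `p`. -/
noncomputable def probOf {Ω S : Type*} [Fintype Ω] [DecidableEq S]
    (p : Ω → ℝ) (X : Ω → S) (s : S) : ℝ :=
  ∑ ω : Ω, if X ω = s then p ω else 0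

/-- Base-2 Shannon entropy of the random variable `X` under the pmf `p`. -/
noncomputable def ent {Ω S : Type*} [Fintype Ω] [Fintype S] [DecidableEq S]
    (p : Ω → ℝ) (X : Ω → S) : ℝ :=
  ∑ s : S, Real.negMulLog (probOf p X s) / Real.log 2

/-- Conditional entropy `H(X | Y)` (base 2). -/
noncomputable def condEnt {Ω S T : Type*} [Fintype Ω] [Fintype S] [Fintype T]
    [DecidableEq S] [DecidableEq T] (p : Ω → ℝ) (X : Ω → S) (Y : Ω → T) : ℝ :=
  ent p (fun ω => (X ω, Y ω)) - ent p Y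

/-- Mutual information `I(X ; Y)` (base 2). -/
noncomputable def mutInfo {Ω S T : Type*} [Fintype Ω] [Fintype S] [Fintype T]
    [DecidableEq S] [DecidableEq T] (p : Ω → ℝ) (X : Ω → S) (Y : Ω → T) : ℝ :=
  ent p X + ent p Y - ent p (fun ω => (X ω, Y ω))

/-- Binary entropy `H_b(q) = −q·log₂ q − (1−q)·log₂(1−q)` (with `0·log 0 = 0`). -/
noncomputable def binEnt (q : ℝ) : ℝ :=
  Real.negMulLog q / Real.log 2 + Real.negMulLog (1 - q) / Real.log 2

/-- The coordinate random variables on the sample space `Bool × Bool × Bool`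
(`true` encodes `1`, `false` encodes `0`). -/
def Xv : Bool × Bool × Bool → Bool := fun ω => ω.1

def Av : Bool × Bool × Bool → Bool := fun ω => ω.2.1

def Yv : Bool × Bool × Bool → Bool := fun ω => ω.2.2

/-- Example 1 joint pmf on `{0,1}³`: `X ∼ Bern(1/2)`; `P(A=1|X=0) = α`, `P(A=0|X=1) = β`;
given `(X,A)`: if `A=1` then `Y = X`, and if `A=0` then `Y ∼ Bern(1/2)` independent of `X`. -/
noncomputable def ex1Pmf (α β : ℝ) : Bool × Bool × Bool → ℝ := fun ω =>
  (1/2) * (if ω.1 then (if ω.2.1 then 1 - β else β) else (if ω.2.1 then α else 1 - α)) *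
    (if ω.2.1 then (if ω.2.2 = ω.1 then 1 else 0) else 1/2)

open Real in
lemma ent_X (α β : ℝ) : ent (ex1Pmf α β) Xv =
    (negMulLog (1/2) + negMulLog (1/2)) / Real.log 2 := by
  simp only [ent, probOf, ex1Pmf, Xv, Av, Yv, Fintype.sum_prod_type, Fintype.sum_bool]
  norm_num
  ring_nf

open Real in
lemma ent_A (α β : ℝ) : ent (ex1Pmf α β) Av =
    (negMulLog ((α + (1-β)) * (1/2)) + negMulLog (((1-α) + β) * (1/2))) / Real.log 2 := by
  simp only [ent, probOf, ex1Pmf, Xv, Av, Yv, Fintype.sum_prod_type, Fintype.sum_bool]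
  norm_num
  ring_nf

open Real in
lemma ent_XA (α β : ℝ) : ent (ex1Pmf α β) (fun ω => (Xv ω, Av ω)) =
    (negMulLog (α * (1/2)) + negMulLog ((1-α) * (1/2)) + negMulLog ((1-β) * (1/2))
      + negMulLog (β * (1/2))) / Real.log 2 := by
  simp only [ent, probOf, ex1Pmf, Xv, Av, Yv, Fintype.sum_prod_type, Fintype.sum_bool]
  norm_num
  ring_nf

open Real in
lemma ent_YA (α β : ℝ) : ent (ex1Pmf α β) (fun ω => (Yv ω, Av ω)) =
    (negMulLog (α * (1/2)) + negMulLog ((1-β) * (1/2))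
      + negMulLog (((1-α) + β) * (1/4)) + negMulLog (((1-α) + β) * (1/4))) / Real.log 2 := by
  simp only [ent, probOf, ex1Pmf, Xv, Av, Yv, Fintype.sum_prod_type, Fintype.sum_bool]
  norm_num
  ring_nf

open Real in
lemma ent_XYA (α β : ℝ) : ent (ex1Pmf α β) (fun ω => (Xv ω, (Yv ω, Av ω))) =
    (negMulLog (α * (1/2)) + negMulLog ((1-β) * (1/2))
      + negMulLog ((1-α) * (1/4)) + negMulLog ((1-α) * (1/4))
      + negMulLog (β * (1/4)) + negMulLog (β * (1/4))) / Real.log 2 := by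
  simp only [ent, probOf, ex1Pmf, Xv, Av, Yv, Fintype.sum_prod_type, Fintype.sum_bool]
  norm_num
  ring_nf

open Real in
lemma ent_YXA (α β : ℝ) : ent (ex1Pmf α β) (fun ω => (Yv ω, (Xv ω, Av ω))) =
    (negMulLog (α * (1/2)) + negMulLog ((1-β) * (1/2))
      + negMulLog ((1-α) * (1/4)) + negMulLog ((1-α) * (1/4))
      + negMulLog (β * (1/4)) + negMulLog (β * (1/4))) / Real.log 2 := by
  simp only [ent, probOf, ex1Pmf, Xv, Av, Yv, Fintype.sum_prod_type, Fintype.sum_bool]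
  norm_num
  ring_nf

open Real in
lemma ent_XY_A (α β : ℝ) : ent (ex1Pmf α β) (fun ω => ((Xv ω, Yv ω), Av ω)) =
    (negMulLog (α * (1/2)) + negMulLog ((1-β) * (1/2))
      + negMulLog ((1-α) * (1/4)) + negMulLog ((1-α) * (1/4))
      + negMulLog (β * (1/4)) + negMulLog (β * (1/4))) / Real.log 2 := by
  simp only [ent, probOf, ex1Pmf, Xv, Av, Yv, Fintype.sum_prod_type, Fintype.sum_bool]
  norm_num
  ring_nf

lemma nml_half : Real.negMulLog (1/2 : ℝ) = (1/2) * Real.log 2 := by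
  rw [Real.negMulLog, show (1/2:ℝ) = 2⁻¹ by norm_num, Real.log_inv]; ring

lemma nml_quarter : Real.negMulLog (1/4 : ℝ) = (1/2) * Real.log 2 := by
  rw [Real.negMulLog, show (1/4:ℝ) = 4⁻¹ by norm_num, Real.log_inv,
    show (4:ℝ) = 2^2 by norm_num, Real.log_pow]
  push_cast; ring

lemma nml_inv (s : ℝ) : Real.negMulLog s⁻¹ = s⁻¹ * Real.log s := by
  rw [Real.negMulLog, Real.log_inv]; ring

set_option maxHeartbeats 2000000 in
theorem stmt_7 (α β : ℝ) (hα : α ∈ Set.Icc (0:ℝ) 1) (hβ : β ∈ Set.Icc (0:ℝ) 1)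
    (hpos : 0 < α + (1 - β)) :
    (mutInfo (ex1Pmf α β) Xv Av + condEnt (ex1Pmf α β) Xv (fun ω => (Yv ω, Av ω))
        = 1 - 0.5 * (α + (1 - β)) * binEnt (α / (α + (1 - β))))
    ∧ condEnt (ex1Pmf α β) Yv (fun ω => (Xv ω, Av ω)) = 0.5 * ((1 - α) + β)
    ∧ (mutInfo (ex1Pmf α β) Xv Av + condEnt (ex1Pmf α β) (fun ω => (Xv ω, Yv ω)) Av
        = 1 + 0.5 * ((1 - α) + β)) := by
  have hs : (α + (1 - β)) ≠ 0 := ne_of_gt hpos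
  have hlog2 : Real.log 2 ≠ 0 := ne_of_gt (Real.log_pos (by norm_num))
  have hb : (1 : ℝ) - α * (α + (1 - β))⁻¹ = (1 - β) * (α + (1 - β))⁻¹ := by
    field_simp
    ring
  have hd : α / (α + (1 - β)) = α * (α + (1 - β))⁻¹ := div_eq_mul_inv _ _
  refine ⟨?_, ?_, ?_⟩
  · simp only [mutInfo, condEnt, binEnt, ent_X, ent_A, ent_XA, ent_YA, ent_XYA, hb, hd,
      Real.negMulLog_mul, nml_half, nml_quarter, nml_inv]
    simp only [Real.negMulLog]
    field_simp
    ring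
  · simp only [condEnt, ent_XA, ent_YXA, Real.negMulLog_mul, nml_half, nml_quarter]
    simp only [Real.negMulLog]
    field_simp
    ring
  · simp only [mutInfo, condEnt, ent_X, ent_A, ent_XA, ent_XY_A, Real.negMulLog_mul,
      nml_half, nml_quarter]
    simp only [Real.negMulLog]
    field_simp
    ring
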